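/- arXiv:2112.06946 — 2 statements merged into one kernel-verified Lean document; each statement's English description precedes it below -/
import Mathlib

section
/- Let Z be a unitary on ℂ^q with Z^n = 1 and let L = nM. Suppose |Ψ⟩ ∈ (ℂ^q)^{⊗L} is a simultaneous eigenvector of the cyclic shift T (eigenvalue λ) and of the global symmetry Z^{⊗L} (eigenvalue ω) with ω ≠ 1. Then the twisted state U|Ψ⟩, with U = ⊗_i Z^i, is an eigenvector of T with eigenvalue ω̄·λ ≠ λ, and consequently ⟨Ψ|U|Ψ⟩ = 0. -/
open Matrix Complex

/-- The cyclic coordinate shift: `(shiftIdx L q g) i = g (i+1 mod L)`. -/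
def shiftIdx (L q : ℕ) (g : Fin L → Fin q) : Fin L → Fin q :=
  fun i => g ⟨(i.val + 1) % L, Nat.mod_lt _ (Nat.lt_of_le_of_lt (Nat.zero_le _) i.isLt)⟩

/-- The translation (cyclic shift) unitary on `(ℂ^q)^{⊗L}`, acting on basis vectors by
`|a_1 ... a_L⟩ ↦ |a_L a_1 ... a_{L-1}⟩`. -/
noncomputable def Tshift (L q : ℕ) : Matrix (Fin L → Fin q) (Fin L → Fin q) ℂ :=
  Matrix.of fun f g => if shiftIdx L q f = g then 1 else 0

/-- The tensor product operator `A_1 ⊗ ... ⊗ A_L` acting as `A_i` on the i-th factor of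
`(ℂ^q)^{⊗L}`, given by entries `∏ i, (A i) (f i) (g i)`. -/
noncomputable def tens (L q : ℕ) (A : Fin L → Matrix (Fin q) (Fin q) ℂ) :
    Matrix (Fin L → Fin q) (Fin L → Fin q) ℂ :=
  Matrix.of fun f g => ∏ i, A i (f i) (g i)

section Aux

variable {L q : ℕ}

lemma shiftIdx_eq_add_one [NeZero L] (g : Fin L → Fin q) :
    shiftIdx L q g = fun i => g (i + 1) := by
  funext i
  simp only [shiftIdx]
  congr 1
  ext
  simp [Fin.val_add, Fin.val_one', Nat.add_mod_mod]

lemma tshift_mulVec (v : (Fin L → Fin q) → ℂ) (f : Fin L → Fin q) :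
    (Tshift L q).mulVec v f = v (shiftIdx L q f) := by
  simp [Tshift, mulVec, dotProduct]

lemma tens_mul (A B : Fin L → Matrix (Fin q) (Fin q) ℂ) :
    tens L q A * tens L q B = tens L q fun i => A i * B i := by
  ext f g
  simp only [tens, Matrix.mul_apply, of_apply]
  rw [Finset.prod_univ_sum]
  simp [Finset.prod_mul_distrib]

lemma tens_one : tens L q (fun _ => (1 : Matrix (Fin q) (Fin q) ℂ)) = 1 := by
  ext f g
  simp only [tens, of_apply, Matrix.one_apply]
  by_cases h : f = g
  · subst h; simp
  · rw [if_neg h]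
    obtain ⟨i, hi⟩ := Function.ne_iff.mp h
    exact Finset.prod_eq_zero (Finset.mem_univ i) (by simp [Matrix.one_apply, hi])

lemma tens_pow (Z : Matrix (Fin q) (Fin q) ℂ) (k : ℕ) :
    (tens L q fun _ => Z) ^ k = tens L q fun _ => Z ^ k := by
  induction k with
  | zero => simp [tens_one]
  | succ k ih =>
    rw [pow_succ, ih, tens_mul]
    exact congrArg (tens L q) (funext fun _ => (pow_succ Z k).symm)

lemma tshift_mul_tens [NeZero L] (A : Fin L → Matrix (Fin q) (Fin q) ℂ) :
    Tshift L q * tens L q A = tens L q (fun i => A (i - 1)) * Tshift L q := by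
  ext f g
  have h1 : (Tshift L q * tens L q A) f g = ∏ i, A i (f (i + 1)) (g i) := by
    simp [Tshift, tens, Matrix.mul_apply, shiftIdx_eq_add_one]
  have h2 : (tens L q (fun i => A (i - 1)) * Tshift L q) f g
      = ∏ i, A (i - 1) (f i) (g (i - 1)) := by
    rw [Matrix.mul_apply]
    rw [Finset.sum_eq_single (fun i => g (i - 1))]
    · simp only [Tshift, tens, of_apply, shiftIdx_eq_add_one]
      rw [if_pos (by funext i; rw [add_sub_cancel_right]), mul_one]
    · intro h _ hh
      simp only [Tshift, of_apply, shiftIdx_eq_add_one]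
      rw [if_neg, mul_zero]
      intro hc
      apply hh
      funext i
      have := congrFun hc (i - 1)
      simpa using this
    · simp
  rw [h1, h2]
  exact (Fintype.prod_equiv (Equiv.subRight (1 : Fin L))
    (fun i => A (i - 1) (f i) (g (i - 1))) (fun i => A i (f (i + 1)) (g i))
    (fun i => by simp [Equiv.subRight, sub_add_cancel])).symm

lemma mulVec_pow_eig {m : Type*} [Fintype m] [DecidableEq m]
    (A : Matrix m m ℂ) (v : m → ℂ) (c : ℂ) (h : A.mulVec v = c • v) (k : ℕ) :
    (A ^ k).mulVec v = c ^ k • v := by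
  induction k with
  | zero => simp [Matrix.one_mulVec]
  | succ k ih =>
    rw [pow_succ, ← Matrix.mulVec_mulVec, h, Matrix.mulVec_smul, ih, smul_smul,
      pow_succ, mul_comm]

end Aux

/-- ℤ_n × T LSM momentum boost. If `Ψ` is a simultaneous eigenvector of the
cyclic shift `T` (eigenvalue `λ`) and of `Z^{⊗L}` (eigenvalue `ω ≠ 1`), then the twisted
state `UΨ` (`U = ⊗_i Z^i`) is a `T`-eigenvector with eigenvalue `ω̄ λ ≠ λ`, and
`⟨Ψ, U Ψ⟩ = 0`. -/
theorem Zn_LSM_momentum_boost (q n M : ℕ) (hq : 1 ≤ q) (hn : 0 < n) (hM : 0 < M)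
    (Z : Matrix (Fin q) (Fin q) ℂ) (hZ : Z ∈ Matrix.unitaryGroup (Fin q) ℂ)
    (hZn : Z ^ n = 1) (lam ω : ℂ) (hω : ω ≠ 1)
    (Ψ : (Fin (n * M) → Fin q) → ℂ) (hΨ : Ψ ≠ 0)
    (heigT : (Tshift (n * M) q).mulVec Ψ = lam • Ψ)
    (heigZ : (tens (n * M) q fun _ => Z).mulVec Ψ = ω • Ψ) :
    (Tshift (n * M) q).mulVec ((tens (n * M) q fun i => Z ^ (i.val + 1)).mulVec Ψ) =
        ((starRingEnd ℂ) ω * lam) • (tens (n * M) q fun i => Z ^ (i.val + 1)).mulVec Ψ ∧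
      (starRingEnd ℂ) ω * lam ≠ lam ∧
      ∑ f, (starRingEnd ℂ) (Ψ f) *
        ((tens (n * M) q fun i => Z ^ (i.val + 1)).mulVec Ψ) f = 0 := by
  have hL : 0 < n * M := Nat.mul_pos hn hM
  haveI : NeZero (n * M) := ⟨hL.ne'⟩
  obtain ⟨f₀, hf₀⟩ := Function.ne_iff.mp hΨ
  have hf0 : Ψ f₀ ≠ 0 := hf₀
  -- unitarity facts
  have hZZs : Z * star Z = 1 := Matrix.mem_unitaryGroup_iff.mp hZ
  have hZsZ : star Z * Z = 1 := Matrix.mem_unitaryGroup_iff'.mp hZ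
  have hZL : Z ^ (n * M) = 1 := by rw [pow_mul, hZn, one_pow]
  -- ω is unimodular
  have hωn : ω ^ n = 1 := by
    have h1 : ((tens (n * M) q fun _ => Z) ^ n).mulVec Ψ = ω ^ n • Ψ :=
      mulVec_pow_eig _ _ _ heigZ n
    rw [tens_pow, hZn, tens_one, Matrix.one_mulVec] at h1
    have h2 := congrFun h1 f₀
    simp only [Pi.smul_apply, smul_eq_mul] at h2
    exact (mul_right_cancel₀ hf0 ((one_mul (Ψ f₀)).trans h2)).symm
  have hωabs : (starRingEnd ℂ) ω * ω = 1 := by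
    rw [mul_comm, Complex.mul_conj, Complex.normSq_eq_norm_sq,
      Complex.norm_eq_one_of_pow_eq_one hωn hn.ne']
    norm_num
  -- pointwise translation eigen-relation
  have hTpt : ∀ f : Fin (n * M) → Fin q, Ψ (fun i => f (i + 1)) = lam * Ψ f := by
    intro f
    have h := congrFun heigT f
    rw [tshift_mulVec, shiftIdx_eq_add_one] at h
    simpa using h
  -- iterate: lam ^ L = 1
  open Fin.CommRing in
  have key : ∀ (k : ℕ) (f : Fin (n * M) → Fin q),
      Ψ (fun i => f (i + (k : Fin (n * M)))) = lam ^ k * Ψ f := by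
    intro k
    induction k with
    | zero => intro f; simp
    | succ k ih =>
      intro f
      have h1 := hTpt (fun i => f (i + (k : Fin (n * M))))
      have h2 : (fun i => f (i + ((k : ℕ) + 1 : ℕ))) =
          fun i => f ((i + 1) + (k : Fin (n * M))) := by
        funext i
        congr 1
        push_cast
        ring
      rw [h2, h1, ih f, pow_succ]
      ring
  have hlamL : lam ^ (n * M) = 1 := by
    have h1 := key (n * M) f₀
    rw [Fin.natCast_self] at h1
    simp only [add_zero] at h1
    have h2 : (1 : ℂ) * Ψ f₀ = lam ^ (n * M) * Ψ f₀ := by rw [one_mul]; exact h1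
    exact (mul_right_cancel₀ hf0 h2).symm
  have hlam0 : lam ≠ 0 := by
    intro h
    rw [h, zero_pow hL.ne'] at hlamL
    exact zero_ne_one hlamL
  have hlamabs : (starRingEnd ℂ) lam * lam = 1 := by
    rw [mul_comm, Complex.mul_conj, Complex.normSq_eq_norm_sq,
      Complex.norm_eq_one_of_pow_eq_one hlamL hL.ne']
    norm_num
  -- exponent-shift identity
  have hA : ∀ i : Fin (n * M), Z ^ ((i - 1).val + 1) = Z ^ (i.val + 1) * star Z := by
    intro i
    have e1 : Z ^ (i.val + 1) * star Z = Z ^ i.val := by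
      rw [pow_succ, mul_assoc, hZZs, mul_one]
    rw [e1, pow_eq_pow_mod ((i - 1).val + 1) hZL]
    have e2 : i.val = (((i - 1) + 1 : Fin (n * M))).val := by rw [sub_add_cancel]
    rw [e2, Fin.val_add, Fin.val_one', Nat.add_mod_mod]
  -- the commutation relation T U = (U V*) T
  have hcomm : Tshift (n * M) q * (tens (n * M) q fun i => Z ^ (i.val + 1))
      = (tens (n * M) q fun i => Z ^ (i.val + 1)) * (tens (n * M) q fun _ => star Z)
        * Tshift (n * M) q := by
    rw [tshift_mul_tens, tens_mul]
    exact congrArg (fun A => A * Tshift (n * M) q)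
      (congrArg (tens (n * M) q) (funext fun i => hA i))
  -- V* Ψ = conj ω • Ψ
  have hVs : (tens (n * M) q fun _ => star Z).mulVec Ψ = (starRingEnd ℂ) ω • Ψ := by
    have h1 : (tens (n * M) q fun _ => star Z) * (tens (n * M) q fun _ => Z) = 1 := by
      rw [tens_mul, show (fun _ : Fin (n * M) => star Z * Z) = fun _ => (1 : Matrix (Fin q) (Fin q) ℂ)
        from funext fun _ => hZsZ, tens_one]
    have h2 : Ψ = ω • (tens (n * M) q fun _ => star Z).mulVec Ψ := by
      calc Ψ = ((tens (n * M) q fun _ => star Z) * (tens (n * M) q fun _ => Z)).mulVec Ψ := by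
              rw [h1, Matrix.one_mulVec]
        _ = (tens (n * M) q fun _ => star Z).mulVec ((tens (n * M) q fun _ => Z).mulVec Ψ) :=
              (Matrix.mulVec_mulVec _ _ _).symm
        _ = (tens (n * M) q fun _ => star Z).mulVec (ω • Ψ) := by rw [heigZ]
        _ = ω • (tens (n * M) q fun _ => star Z).mulVec Ψ := Matrix.mulVec_smul _ _ _
    have h3 := congrArg (fun v => (starRingEnd ℂ) ω • v) h2
    simp only [smul_smul, hωabs, one_smul] at h3
    exact h3.symm
  -- Part 1
  have part1 : (Tshift (n * M) q).mulVec ((tens (n * M) q fun i => Z ^ (i.val + 1)).mulVec Ψ) =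
      ((starRingEnd ℂ) ω * lam) • (tens (n * M) q fun i => Z ^ (i.val + 1)).mulVec Ψ := by
    rw [Matrix.mulVec_mulVec, hcomm, ← Matrix.mulVec_mulVec, heigT, Matrix.mulVec_smul,
      ← Matrix.mulVec_mulVec, hVs, Matrix.mulVec_smul, smul_smul, mul_comm lam]
  -- Part 2
  have hconjω1 : (starRingEnd ℂ) ω ≠ 1 := by
    intro h
    apply hω
    have := congrArg (starRingEnd ℂ) h
    simpa using this
  have part2 : (starRingEnd ℂ) ω * lam ≠ lam := by
    intro h
    exact hconjω1 (mul_right_cancel₀ hlam0 (h.trans (one_mul lam).symm))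
  -- Part 3
  refine ⟨part1, part2, ?_⟩
  set Φ : (Fin (n * M) → Fin q) → ℂ := (tens (n * M) q fun i => Z ^ (i.val + 1)).mulVec Ψ with hΦ
  have hΦpt : ∀ f : Fin (n * M) → Fin q,
      Φ (fun i => f (i + 1)) = ((starRingEnd ℂ) ω * lam) * Φ f := by
    intro f
    have h := congrFun part1 f
    rw [tshift_mulVec, shiftIdx_eq_add_one] at h
    simpa using h
  set E : (Fin (n * M) → Fin q) ≃ (Fin (n * M) → Fin q) :=
    Equiv.arrowCongr (Equiv.addRight (1 : Fin (n * M))).symm (Equiv.refl (Fin q)) with hEdef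
  have hE : ∀ f : Fin (n * M) → Fin q, E f = fun i => f (i + 1) := by
    intro f
    funext i
    simp [hEdef, Equiv.arrowCongr]
  have hS : (∑ f, (starRingEnd ℂ) (Ψ f) * Φ f)
      = (starRingEnd ℂ) ω * ∑ f, (starRingEnd ℂ) (Ψ f) * Φ f := by
    calc (∑ f, (starRingEnd ℂ) (Ψ f) * Φ f)
        = ∑ f, (starRingEnd ℂ) (Ψ (E f)) * Φ (E f) :=
          (Equiv.sum_comp E fun f => (starRingEnd ℂ) (Ψ f) * Φ f).symm
      _ = ∑ f, (starRingEnd ℂ) ω * ((starRingEnd ℂ) (Ψ f) * Φ f) := by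
          refine Finset.sum_congr rfl fun f _ => ?_
          rw [hE f, hTpt f, hΦpt f, _root_.map_mul]
          linear_combination ((starRingEnd ℂ) ω * (starRingEnd ℂ) (Ψ f) * Φ f) * hlamabs
      _ = (starRingEnd ℂ) ω * ∑ f, (starRingEnd ℂ) (Ψ f) * Φ f := by
          rw [Finset.mul_sum]
  have h5 : (1 - (starRingEnd ℂ) ω) * (∑ f, (starRingEnd ℂ) (Ψ f) * Φ f) = 0 := by
    rw [sub_mul, one_mul, ← hS, sub_self]
  rcases mul_eq_zero.mp h5 with h | h
  · exact absurd (by linear_combination -h : (starRingEnd ℂ) ω = 1) hconjω1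
  · exact h
end

section
/- For N odd, any simultaneous eigenvector |Ψ⟩ of T, X_glob, Z_glob as above satisfies: there exists a unitary V ∈ {U_x, U_z, U_{xz}} such that V|Ψ⟩ is a T-eigenvector with eigenvalue equal to minus the T-eigenvalue of |Ψ⟩; in particular ⟨Ψ|V|Ψ⟩ = 0. -/
open Matrix Complex

/-- Pauli X. -/
noncomputable def σx : Matrix (Fin 2) (Fin 2) ℂ := !![0, 1; 1, 0]

/-- Pauli Z. -/
noncomputable def σz : Matrix (Fin 2) (Fin 2) ℂ := !![1, 0; 0, -1]

/-- `U_x = (1 ⊗ σ_x)^{⊗N}` on `N` two-qubit unit cells (σ_x on odd qubit sites). -/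
noncomputable def Ux (N : ℕ) := tens (2 * N) 2 fun i => if i.val % 2 = 1 then σx else 1

/-- `U_z = (1 ⊗ σ_z)^{⊗N}`. -/
noncomputable def Uz (N : ℕ) := tens (2 * N) 2 fun i => if i.val % 2 = 1 then σz else 1

/-- `U_{xz} = (σ_x ⊗ σ_z)^{⊗N}`. -/
noncomputable def Uxz (N : ℕ) := tens (2 * N) 2 fun i => if i.val % 2 = 0 then σx else σz

/-- Global ℤ_2 symmetry `X_glob = σ_x^{⊗2N}`. -/
noncomputable def Xglob (N : ℕ) := tens (2 * N) 2 fun _ => σx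

/-- Global ℤ_2 symmetry `Z_glob = σ_z^{⊗2N}`. -/
noncomputable def Zglob (N : ℕ) := tens (2 * N) 2 fun _ => σz

namespace LSMaux

noncomputable def χ (a : Fin 2) : ℂ := if a = 0 then 1 else -1
def flp (a : Fin 2) : Fin 2 := a + 1

lemma flp_flp (a : Fin 2) : flp (flp a) = a := by fin_cases a <;> rfl
lemma χ_flp (a : Fin 2) : χ (flp a) = -χ a := by
  fin_cases a <;> simp [χ, flp] <;> norm_num
lemma χ_mul_self (a : Fin 2) : χ a * χ a = 1 := by fin_cases a <;> simp [χ]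

lemma σx_apply (a b : Fin 2) : σx a b = if b = flp a then 1 else 0 := by
  fin_cases a <;> fin_cases b <;> simp [σx, flp]
lemma σz_apply (a b : Fin 2) : σz a b = if b = a then χ a else 0 := by
  fin_cases a <;> fin_cases b <;> simp [σz, χ]
lemma one_apply₂ (a b : Fin 2) : (1 : Matrix (Fin 2) (Fin 2) ℂ) a b = if b = a then 1 else 0 := by
  rw [Matrix.one_apply]; simp [eq_comm]

lemma tens_mulVec {L : ℕ} (A : Fin L → Matrix (Fin 2) (Fin 2) ℂ)
    (flip : Fin L → Fin 2 → Fin 2) (sgn : Fin L → Fin 2 → ℂ)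
    (hA : ∀ i a b, A i a b = if b = flip i a then sgn i a else 0)
    (Ψ : (Fin L → Fin 2) → ℂ) (f : Fin L → Fin 2) :
    (tens L 2 A).mulVec Ψ f = (∏ i, sgn i (f i)) * Ψ (fun i => flip i (f i)) := by
  unfold tens Matrix.mulVec dotProduct
  rw [Finset.sum_eq_single (fun i => flip i (f i))]
  · simp only [Matrix.of_apply]
    congr 1
    exact Finset.prod_congr rfl fun i _ => by rw [hA, if_pos rfl]
  · intro g _ hg
    have : ∃ i, g i ≠ flip i (f i) := by
      by_contra h; push_neg at h; exact hg (funext h)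
    obtain ⟨i, hi⟩ := this
    simp only [Matrix.of_apply]
    rw [Finset.prod_eq_zero (Finset.mem_univ i) (by rw [hA, if_neg hi]), zero_mul]
  · intro h; exact absurd (Finset.mem_univ _) h

def flipO (N : ℕ) (f : Fin (2*N) → Fin 2) : Fin (2*N) → Fin 2 :=
  fun i => if i.val % 2 = 1 then flp (f i) else f i
def flipE (N : ℕ) (f : Fin (2*N) → Fin 2) : Fin (2*N) → Fin 2 :=
  fun i => if i.val % 2 = 1 then f i else flp (f i)
def flipA (N : ℕ) (f : Fin (2*N) → Fin 2) : Fin (2*N) → Fin 2 := fun i => flp (f i)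
noncomputable def sgnO (N : ℕ) (f : Fin (2*N) → Fin 2) : ℂ :=
  ∏ i, if i.val % 2 = 1 then χ (f i) else 1
noncomputable def sgnE (N : ℕ) (f : Fin (2*N) → Fin 2) : ℂ :=
  ∏ i, if i.val % 2 = 1 then 1 else χ (f i)
noncomputable def sgnA (N : ℕ) (f : Fin (2*N) → Fin 2) : ℂ := ∏ i, χ (f i)

lemma Ux_mulVec (N : ℕ) (Ψ : (Fin (2*N) → Fin 2) → ℂ) (f) :
    (Ux N).mulVec Ψ f = Ψ (flipO N f) := by
  rw [Ux, tens_mulVec _ (fun i a => if i.val % 2 = 1 then flp a else a) (fun _ _ => 1)]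
  · simp only [Finset.prod_const_one, one_mul]; rfl
  · intro i a b
    by_cases h : i.val % 2 = 1 <;> simp [h, σx_apply, one_apply₂]

lemma Uz_mulVec (N : ℕ) (Ψ : (Fin (2*N) → Fin 2) → ℂ) (f) :
    (Uz N).mulVec Ψ f = sgnO N f * Ψ f := by
  rw [Uz, tens_mulVec _ (fun _ a => a) (fun i a => if i.val % 2 = 1 then χ a else 1)]
  · rfl
  · intro i a b
    by_cases h : i.val % 2 = 1 <;> simp [h, σz_apply, one_apply₂]

lemma Uxz_mulVec (N : ℕ) (Ψ : (Fin (2*N) → Fin 2) → ℂ) (f) :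
    (Uxz N).mulVec Ψ f = sgnO N f * Ψ (flipE N f) := by
  rw [Uxz, tens_mulVec _ (fun i a => if i.val % 2 = 1 then a else flp a)
      (fun i a => if i.val % 2 = 1 then χ a else 1)]
  · rfl
  · intro i a b
    have h2 := Nat.mod_two_eq_zero_or_one i.val
    by_cases h : i.val % 2 = 1
    · have : ¬ (i.val % 2 = 0) := by omega
      simp [h, this, σz_apply]
    · have : i.val % 2 = 0 := by omega
      simp [h, this, σx_apply]

lemma Xglob_mulVec (N : ℕ) (Ψ : (Fin (2*N) → Fin 2) → ℂ) (f) :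
    (Xglob N).mulVec Ψ f = Ψ (flipA N f) := by
  rw [Xglob, tens_mulVec _ (fun _ a => flp a) (fun _ _ => 1)]
  · simp only [Finset.prod_const_one, one_mul]; rfl
  · intro i a b; exact σx_apply a b

lemma Zglob_mulVec (N : ℕ) (Ψ : (Fin (2*N) → Fin 2) → ℂ) (f) :
    (Zglob N).mulVec Ψ f = sgnA N f * Ψ f := by
  rw [Zglob, tens_mulVec _ (fun _ a => a) (fun _ a => χ a)]
  · rfl
  · intro i a b; exact σz_apply a b

lemma Tshift_mulVec (L q : ℕ) (Ψ : (Fin L → Fin q) → ℂ) (f) :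
    (Tshift L q).mulVec Ψ f = Ψ (shiftIdx L q f) := by
  unfold Tshift Matrix.mulVec dotProduct
  simp only [Matrix.of_apply, ite_mul, one_mul, zero_mul]
  rw [Finset.sum_ite_eq]
  simp

/-- the index rotation -/
def rotN (N : ℕ) (i : Fin (2*N)) : Fin (2*N) :=
  ⟨(i.val + 1) % (2*N), Nat.mod_lt _ (Nat.lt_of_le_of_lt (Nat.zero_le _) i.isLt)⟩

lemma shiftIdx_eq (N : ℕ) (f : Fin (2*N) → Fin 2) : shiftIdx (2*N) 2 f = f ∘ rotN N := rfl

lemma mod_succ_eq (L a : ℕ) (ha : a < L) : (a+1) % L = if a+1 = L then 0 else a+1 := by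
  split
  · next h => rw [h]; exact Nat.mod_self L
  · next h => exact Nat.mod_eq_of_lt (by omega)

lemma rot_bij (N : ℕ) : Function.Bijective (rotN N) := by
  rw [← Finite.injective_iff_bijective]
  intro i j h
  have h' : (i.val + 1) % (2*N) = (j.val + 1) % (2*N) := congrArg Fin.val h
  have hi := i.isLt
  have hj := j.isLt
  rw [mod_succ_eq _ _ hi, mod_succ_eq _ _ hj] at h'
  apply Fin.ext
  split_ifs at h' <;> omega

lemma shift_bij (N : ℕ) :
    Function.Bijective (fun f : Fin (2*N) → Fin 2 => shiftIdx (2*N) 2 f) := by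
  have := Function.Bijective.comp_right (γ := Fin 2) (rot_bij N)
  convert this using 1
  funext f; rfl

lemma rot_parity (N : ℕ) (i : Fin (2*N)) : (rotN N i).val % 2 = (i.val + 1) % 2 := by
  show (i.val + 1) % (2*N) % 2 = (i.val + 1) % 2
  exact Nat.mod_mod_of_dvd _ ⟨N, rfl⟩

-- algebra lemmas
lemma flipA_flipO (N : ℕ) (f) : flipA N (flipO N f) = flipE N f := by
  funext i
  by_cases h : i.val % 2 = 1 <;> simp [flipA, flipO, flipE, h, flp_flp]

lemma sgnA_eq (N : ℕ) (f) : sgnA N f = sgnO N f * sgnE N f := by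
  rw [sgnO, sgnE, ← Finset.prod_mul_distrib]
  exact Finset.prod_congr rfl fun i _ => by by_cases h : i.val % 2 = 1 <;> simp [h]

lemma sgnO_sq (N : ℕ) (f) : sgnO N f * sgnO N f = 1 := by
  rw [sgnO, ← Finset.prod_mul_distrib]
  apply Finset.prod_eq_one
  intro i _
  by_cases h : i.val % 2 = 1 <;> simp [h, χ_mul_self]

lemma prod_ite_pow (c : ℂ) (N : ℕ) :
    (∏ i : Fin (2*N), if i.val % 2 = 1 then c else 1) = c ^ N := by
  rw [Fin.prod_univ_eq_prod_range (fun n => if n % 2 = 1 then c else 1) (2*N)]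
  induction N with
  | zero => simp
  | succ n ih =>
    have : 2 * (n+1) = (2*n) + 1 + 1 := by ring
    rw [this, Finset.prod_range_succ, Finset.prod_range_succ, ih]
    have h1 : (2*n) % 2 = 0 := by omega
    have h2 : (2*n+1) % 2 = 1 := by omega
    have e1 : (if (2*n) % 2 = 1 then c else 1) = 1 := by simp [h1]
    have e2 : (if (2*n+1) % 2 = 1 then c else 1) = c := by simp [h2]
    rw [e1, e2, pow_succ]
    ring

lemma sgnA_flipO (N : ℕ) (f) : sgnA N (flipO N f) = (-1:ℂ)^N * sgnA N f := by
  rw [sgnA, sgnA, ← prod_ite_pow, ← Finset.prod_mul_distrib]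
  apply Finset.prod_congr rfl
  intro i _
  by_cases h : i.val % 2 = 1 <;> simp [flipO, h, χ_flp]

lemma sgnO_shift (N : ℕ) (f) : sgnO N (shiftIdx (2*N) 2 f) = sgnE N f := by
  rw [sgnE, ← Function.Bijective.prod_comp (rot_bij N)
      (fun j => if j.val % 2 = 1 then 1 else χ (f j))]
  apply Finset.prod_congr rfl
  intro i _
  have hp := rot_parity N i
  have h2 := Nat.mod_two_eq_zero_or_one i.val
  by_cases h : i.val % 2 = 1
  · have : ¬ ((rotN N i).val % 2 = 1) := by omega
    simp [this, h, shiftIdx_eq, Function.comp]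
  · have : (rotN N i).val % 2 = 1 := by omega
    simp [this, h, shiftIdx_eq, Function.comp]

lemma flipO_shift (N : ℕ) (f) :
    flipO N (shiftIdx (2*N) 2 f) = shiftIdx (2*N) 2 (flipE N f) := by
  funext i
  have hp := rot_parity N i
  have h2 := Nat.mod_two_eq_zero_or_one i.val
  show (if i.val % 2 = 1 then flp (f (rotN N i)) else f (rotN N i)) = flipE N f (rotN N i)
  by_cases h : i.val % 2 = 1
  · have : ¬ ((rotN N i).val % 2 = 1) := by omega
    simp [flipE, h, this]
  · have : (rotN N i).val % 2 = 1 := by omega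
    simp [flipE, h, this]

lemma flipE_shift (N : ℕ) (f) :
    flipE N (shiftIdx (2*N) 2 f) = shiftIdx (2*N) 2 (flipO N f) := by
  funext i
  have hp := rot_parity N i
  have h2 := Nat.mod_two_eq_zero_or_one i.val
  show (if i.val % 2 = 1 then f (rotN N i) else flp (f (rotN N i))) = flipO N f (rotN N i)
  by_cases h : i.val % 2 = 1
  · have : ¬ ((rotN N i).val % 2 = 1) := by omega
    simp [flipO, h, this]
  · have : (rotN N i).val % 2 = 1 := by omega
    simp [flipO, h, this]

lemma orth (N : ℕ) (lam : ℂ) (Ψ Φ : (Fin (2*N) → Fin 2) → ℂ)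
    (hΨ : ∀ g, Ψ (shiftIdx (2*N) 2 g) = lam * Ψ g)
    (hΦ : ∀ g, Φ (shiftIdx (2*N) 2 g) = -lam * Φ g) :
    ∑ f, (starRingEnd ℂ) (Ψ f) * Φ f = 0 := by
  set S := ∑ f, (starRingEnd ℂ) (Ψ f) * Φ f with hS
  have h1 : ∑ f, (starRingEnd ℂ) (Ψ (shiftIdx (2*N) 2 f)) * Φ (shiftIdx (2*N) 2 f) = S :=
    (shift_bij N).sum_comp (fun f => (starRingEnd ℂ) (Ψ f) * Φ f)
  have h2 : ∑ f, (starRingEnd ℂ) (Ψ (shiftIdx (2*N) 2 f)) * Φ (shiftIdx (2*N) 2 f)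
      = -((starRingEnd ℂ) lam * lam) * S := by
    rw [hS, Finset.mul_sum]
    apply Finset.sum_congr rfl
    intro f _
    rw [hΨ f, hΦ f, RingHom.map_mul]
    ring
  have h3 : (1 + (starRingEnd ℂ) lam * lam) * S = 0 := by
    rw [h1] at h2
    linear_combination h2
  have h4 : (1 + (starRingEnd ℂ) lam * lam) ≠ 0 := by
    rw [← Complex.normSq_eq_conj_mul_self]
    intro h
    have := Complex.normSq_nonneg lam
    have h' : (1 : ℝ) + Complex.normSq lam = 0 := by exact_mod_cast h
    linarith
  exact (mul_eq_zero.mp h3).resolve_left h4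

end LSMaux

open LSMaux in
/-- projective ℤ_2×ℤ_2 LSM. For odd `N`, some twist unitary
`V ∈ {U_x, U_z, U_{xz}}` boosts the momentum of any simultaneous eigenvector `Ψ` by π:
`V Ψ` is a `T`-eigenvector with eigenvalue `-λ`, and `⟨Ψ, V Ψ⟩ = 0`. -/
theorem Z2Z2_LSM (N : ℕ) (hN : Odd N) (Qx Qz : ℤ) (lam : ℂ)
    (Ψ : (Fin (2 * N) → Fin 2) → ℂ) (hΨ : Ψ ≠ 0)
    (heigT : (Tshift (2 * N) 2).mulVec Ψ = lam • Ψ)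
    (heigX : (Xglob N).mulVec Ψ = ((-1 : ℂ) ^ Qx) • Ψ)
    (heigZ : (Zglob N).mulVec Ψ = ((-1 : ℂ) ^ Qz) • Ψ) :
    ∃ V : Matrix (Fin (2 * N) → Fin 2) (Fin (2 * N) → Fin 2) ℂ,
      (V = Ux N ∨ V = Uz N ∨ V = Uxz N) ∧
      (Tshift (2 * N) 2).mulVec (V.mulVec Ψ) = (-lam) • V.mulVec Ψ ∧
      ∑ f, (starRingEnd ℂ) (Ψ f) * (V.mulVec Ψ) f = 0 := by
  have hT : ∀ g, Ψ (shiftIdx (2*N) 2 g) = lam * Ψ g := by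
    intro g
    have h := congrFun heigT g
    rw [Tshift_mulVec] at h
    simpa using h
  have hX : ∀ g, Ψ (flipA N g) = (-1:ℂ)^Qx * Ψ g := by
    intro g
    have h := congrFun heigX g
    rw [Xglob_mulVec] at h
    simpa using h
  have hZ : ∀ g, sgnA N g * Ψ g = (-1:ℂ)^Qz * Ψ g := by
    intro g
    have h := congrFun heigZ g
    rw [Zglob_mulVec] at h
    simpa using h
  by_cases hQx : Odd Qx
  · have hx1 : ((-1:ℂ))^Qx = -1 := Odd.neg_one_zpow hQx
    have key : ∀ g, ((Ux N).mulVec Ψ) (shiftIdx (2*N) 2 g)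
        = -lam * ((Ux N).mulVec Ψ) g := by
      intro g
      rw [Ux_mulVec, Ux_mulVec, flipO_shift, hT, ← flipA_flipO, hX, hx1]
      ring
    refine ⟨Ux N, Or.inl rfl, ?_, orth N lam Ψ _ hT key⟩
    funext f
    rw [Tshift_mulVec, key f, Pi.smul_apply, smul_eq_mul]
  by_cases hQz : Odd Qz
  · have hz1 : ((-1:ℂ))^Qz = -1 := Odd.neg_one_zpow hQz
    have key : ∀ g, ((Uz N).mulVec Ψ) (shiftIdx (2*N) 2 g)
        = -lam * ((Uz N).mulVec Ψ) g := by
      intro g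
      rw [Uz_mulVec, Uz_mulVec, sgnO_shift, hT g]
      have e1 := hZ g
      rw [hz1, sgnA_eq] at e1
      have e2 := sgnO_sq N g
      linear_combination lam * sgnO N g * e1 - lam * sgnE N g * Ψ g * e2
    refine ⟨Uz N, Or.inr (Or.inl rfl), ?_, orth N lam Ψ _ hT key⟩
    funext f
    rw [Tshift_mulVec, key f, Pi.smul_apply, smul_eq_mul]
  · have hx1 : ((-1:ℂ))^Qx = 1 := Even.neg_one_zpow (Int.not_odd_iff_even.mp hQx)
    have hz1 : ((-1:ℂ))^Qz = 1 := Even.neg_one_zpow (Int.not_odd_iff_even.mp hQz)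
    have hNneg : ((-1:ℂ))^N = -1 := Odd.neg_one_pow hN
    have key : ∀ g, ((Uxz N).mulVec Ψ) (shiftIdx (2*N) 2 g)
        = -lam * ((Uxz N).mulVec Ψ) g := by
      intro g
      rw [Uxz_mulVec, Uxz_mulVec, sgnO_shift, flipE_shift, hT]
      have ex := hX (flipO N g)
      rw [hx1, one_mul, flipA_flipO] at ex
      have ez := hZ (flipO N g)
      rw [hz1, one_mul, sgnA_flipO, hNneg, sgnA_eq] at ez
      have e2 := sgnO_sq N g
      rw [ex]
      linear_combination (-lam * sgnO N g) * ez - lam * sgnE N g * Ψ (flipO N g) * e2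
    refine ⟨Uxz N, Or.inr (Or.inr rfl), ?_, orth N lam Ψ _ hT key⟩
    funext f
    rw [Tshift_mulVec, key f, Pi.smul_apply, smul_eq_mul]
end
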